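/- Fix p > 2 and a vector v₁ ∈ ℂⁿ with v₁ ≠ 0 that is real (v₁ ∈ ℝⁿ). For fixed v₂, v₃ ∈ ℂⁿ, define F(z) = |v₁ + z \overline{v₂}|^{p-2} (v₁ + z\overline{v₂}) · v₃ for z ∈ ℂ near 0, where for w ∈ ℂⁿ, |w|² = w·\overline{w}. Then the Wirtinger derivative ∂_{\bar z} F at z = 0 equals ((p−2)/2) |v₁|^{p-4} (v₁·v₂)(v₁·v₃). -/

import Mathlib

/-- Bilinear (non-conjugating) dot product on `ℂⁿ`. -/
noncomputable def dotc {n : ℕ} (w u : EuclideanSpace ℂ (Fin n)) : ℂ := ∑ i, w i * u i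

lemma normsq_sum' {n : ℕ} (x : EuclideanSpace ℂ (Fin n)) :
    ‖x‖ ^ 2 = ∑ i, Complex.normSq (x i) := by
  rw [EuclideanSpace.norm_eq, Real.sq_sqrt (by positivity)]
  simp [Complex.sq_norm]

lemma aux_deriv' {n : ℕ} (p : ℝ) (v₁ w : EuclideanSpace ℂ (Fin n)) (hv₁ : v₁ ≠ 0) :
    HasDerivAt (fun t : ℝ => ‖v₁ + (t : ℂ) • w‖ ^ (p - 2))
      ((p - 2) * ‖v₁‖ ^ (p - 4) *
        (∑ i, ((v₁ i).re * (w i).re + (v₁ i).im * (w i).im))) 0 := by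
  set B : ℝ := ∑ i, ((v₁ i).re * (w i).re + (v₁ i).im * (w i).im) with hB
  set C : ℝ := ∑ i, Complex.normSq (w i) with hC
  set A : ℝ := ∑ i, Complex.normSq (v₁ i) with hA
  have hAnorm : A = ‖v₁‖ ^ 2 := (normsq_sum' v₁).symm
  have hApos : 0 < A := by
    rw [hAnorm]
    exact pow_pos (norm_pos_iff.mpr hv₁) 2
  have hQ : ∀ t : ℝ, ‖v₁ + (t : ℂ) • w‖ ^ 2 = A + 2 * B * t + C * t ^ 2 := by
    intro t
    rw [normsq_sum']
    simp only [hA, hB, hC, PiLp.add_apply, PiLp.smul_apply, smul_eq_mul,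
      Complex.normSq_apply, Complex.add_re, Complex.add_im, Complex.re_ofReal_mul,
      Complex.im_ofReal_mul, Finset.sum_mul, Finset.mul_sum, ← Finset.sum_add_distrib]
    apply Finset.sum_congr rfl
    intro i _
    ring
  have hfun : (fun t : ℝ => ‖v₁ + (t : ℂ) • w‖ ^ (p - 2))
      = fun t : ℝ => (A + 2 * B * t + C * t ^ 2) ^ ((p - 2) / 2) := by
    funext t
    rw [← hQ t, ← Real.rpow_natCast ‖v₁ + (t : ℂ) • w‖ 2, ← Real.rpow_mul (norm_nonneg _)]
    congr 1
    ring
  have hpoly : HasDerivAt (fun t : ℝ => A + 2 * B * t + C * t ^ 2) (2 * B) 0 := by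
    have h1 : HasDerivAt (fun t : ℝ => A + 2 * B * t + C * t ^ 2)
        (0 + 2 * B * 1 + C * (2 * 0 ^ 1)) 0 :=
      ((hasDerivAt_const 0 A).add ((hasDerivAt_id 0).const_mul (2 * B))).add
        ((hasDerivAt_pow 2 0).const_mul C)
    simpa using h1
  have hne : (A + 2 * B * 0 + C * 0 ^ 2) ≠ 0 := by simpa using hApos.ne'
  have h := hpoly.rpow_const (p := (p - 2) / 2) (Or.inl hne)
  rw [hfun]
  convert h using 1
  have hAr : A ^ ((p - 2) / 2 - 1) = ‖v₁‖ ^ (p - 4) := by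
    rw [hAnorm, ← Real.rpow_natCast ‖v₁‖ 2, ← Real.rpow_mul (norm_nonneg _)]
    congr 1
    ring
  have hA0 : A + 2 * B * 0 + C * 0 ^ 2 = A := by ring
  rw [hA0, hAr]
  ring

lemma dotc_add_smul' {n : ℕ} (v₁ c v₃ : EuclideanSpace ℂ (Fin n)) (z : ℂ) :
    dotc (v₁ + z • c) v₃ = dotc v₁ v₃ + z * dotc c v₃ := by
  simp only [dotc, PiLp.add_apply, PiLp.smul_apply, smul_eq_mul, add_mul,
    Finset.sum_add_distrib, Finset.mul_sum, mul_assoc]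

/-- Wirtinger derivative `∂_{z̄}` at `0` of
`F(z) = |v₁ + z v̄₂|^{p-2} (v₁ + z v̄₂)·v₃` equals
`((p-2)/2) |v₁|^{p-4} (v₁·v₂)(v₁·v₃)`, for `v₁` real and nonzero.
Here `∂_{z̄} = (1/2)(∂_x + i ∂_y)`. -/
theorem stmt_7 (n : ℕ) (p : ℝ) (hp : 2 < p)
    (v₁ v₂ v₃ : EuclideanSpace ℂ (Fin n)) (hv₁ : v₁ ≠ 0) (hreal : ∀ i, (v₁ i).im = 0) :
    let cv₂ : EuclideanSpace ℂ (Fin n) := WithLp.toLp 2 (fun i => starRingEnd ℂ (v₂ i))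
    let F : ℂ → ℂ := fun z =>
      ((‖v₁ + z • cv₂‖ ^ (p - 2) : ℝ) : ℂ) * dotc (v₁ + z • cv₂) v₃
    (1 / 2 : ℂ) * (deriv (fun t : ℝ => F t) 0 + Complex.I * deriv (fun t : ℝ => F (t * Complex.I)) 0) =
      (((p - 2) / 2 : ℝ) : ℂ) * ((‖v₁‖ ^ (p - 4) : ℝ) : ℂ) * dotc v₁ v₂ * dotc v₁ v₃ := by
  intro cv₂ F
  set a : ℂ := dotc v₁ v₃ with ha
  set b : ℂ := dotc cv₂ v₃ with hb
  set w₂ : EuclideanSpace ℂ (Fin n) := Complex.I • cv₂ with hw₂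
  set B₁ : ℝ := ∑ i, ((v₁ i).re * (cv₂ i).re + (v₁ i).im * (cv₂ i).im) with hB₁
  set B₂ : ℝ := ∑ i, ((v₁ i).re * (w₂ i).re + (v₁ i).im * (w₂ i).im) with hB₂
  set K : ℝ := (p - 2) * ‖v₁‖ ^ (p - 4) with hK
  set G : ℝ := ‖v₁‖ ^ (p - 2) with hG
  -- derivative of the linear parts
  have hlin : ∀ c : ℂ, HasDerivAt (fun t : ℝ => a + (t : ℂ) * c) c 0 := fun c => by
    simpa using (Complex.ofRealCLM.hasDerivAt.mul_const c).const_add a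
  -- real direction
  have hF1 : (fun t : ℝ => F t) = fun t : ℝ =>
      ((‖v₁ + (t : ℂ) • cv₂‖ ^ (p - 2) : ℝ) : ℂ) * (a + (t : ℂ) * b) := by
    funext t
    simp only [F, dotc_add_smul', ha, hb]
  have hG0 : ‖v₁ + ((0 : ℝ) : ℂ) • cv₂‖ = ‖v₁‖ := by norm_num
  have hd1 : deriv (fun t : ℝ => F t) 0 = ((K * B₁ : ℝ) : ℂ) * a + (G : ℂ) * b := by
    rw [hF1]
    have h := ((aux_deriv' p v₁ cv₂ hv₁).ofReal_comp.mul (hlin b)).deriv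
    simp only [Pi.mul_def] at h
    rw [h, hG0, ← hB₁, ← hK]
    push_cast
    ring
  -- imaginary direction
  have hF2 : (fun t : ℝ => F (t * Complex.I)) = fun t : ℝ =>
      ((‖v₁ + (t : ℂ) • w₂‖ ^ (p - 2) : ℝ) : ℂ) * (a + (t : ℂ) * (Complex.I * b)) := by
    funext t
    have hsm : ((t : ℂ) * Complex.I) • cv₂ = (t : ℂ) • w₂ := by
      rw [hw₂, mul_smul]
    simp only [F, hsm, dotc_add_smul', ha, hb, mul_assoc]
  have hG0' : ‖v₁ + ((0 : ℝ) : ℂ) • w₂‖ = ‖v₁‖ := by norm_num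
  have hd2 : deriv (fun t : ℝ => F (t * Complex.I)) 0
      = ((K * B₂ : ℝ) : ℂ) * a + (G : ℂ) * (Complex.I * b) := by
    rw [hF2]
    have h := ((aux_deriv' p v₁ w₂ hv₁).ofReal_comp.mul (hlin (Complex.I * b))).deriv
    simp only [Pi.mul_def] at h
    rw [h, hG0', ← hB₂, ← hK]
    push_cast
    ring
  -- combine
  have hBB : (B₁ : ℂ) + Complex.I * (B₂ : ℝ) = dotc v₁ v₂ := by
    rw [hB₁, hB₂, dotc]
    push_cast
    rw [Finset.mul_sum, ← Finset.sum_add_distrib]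
    apply Finset.sum_congr rfl
    intro i _
    simp only [hw₂, PiLp.smul_apply, smul_eq_mul, cv₂]
    apply Complex.ext <;>
      simp [Complex.mul_re, Complex.mul_im] <;> ring
  rw [hd1, hd2, ← hBB, hK]
  push_cast
  linear_combination ((G : ℝ) : ℂ) * b / 2 * Complex.I_sq
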